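/- Let (β_n) be a sequence of positive reals with n²β_n → ∞ and n β_n log log n → 0 as n → ∞. For each n, let X_{1,n}, …, X_{n,n} be independent random variables with X_{i,n} ~ χ(i β_n). Set a_n = √(2 log(n² β_n)) and b_n = a_n − log log(n² β_n)/a_n. Then for every x ≥ 0, P( max_{1 ≤ i ≤ n} X_{i,n} ≤ x/a_n + b_n ) → exp(−e^{−x}/4) as n → ∞. -/

import Mathlib

open MeasureTheory ProbabilityTheory Filter Real

/-- The chi distribution with parameter `k > 0`: the pushforward of the Gamma
distribution with shape `k/2` and rate `1/2` under `t ↦ √t`. -/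
noncomputable def chiMeasure (k : ℝ) : Measure ℝ :=
  (gammaMeasure (k / 2) (1 / 2)).map Real.sqrt

section Auxiliary

open Set

/-- Upper incomplete Gamma integral. -/
noncomputable def iGamma (s u : ℝ) : ℝ := ∫ t in Set.Ioi u, Real.exp (-t) * t ^ (s - 1)

lemma iGamma_integrableOn {s u : ℝ} (hs : 0 < s) (hu : 0 ≤ u) :
    IntegrableOn (fun t : ℝ => Real.exp (-t) * t ^ (s - 1)) (Set.Ioi u) := by
  exact (Real.GammaIntegral_convergent hs).mono_set (Set.Ioi_subset_Ioi hu)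

lemma iGamma_nonneg {s u : ℝ} (hs : 0 < s) (hu : 0 ≤ u) : 0 ≤ iGamma s u := by
  apply setIntegral_nonneg measurableSet_Ioi
  intro t ht
  have ht0 : 0 < t := lt_of_le_of_lt hu ht
  positivity

lemma iGamma_le {s u : ℝ} (hs : 0 < s) (hs1 : s ≤ 1) (hu : 0 < u) :
    iGamma s u ≤ u ^ (s - 1) * Real.exp (-u) := by
  have h1 : iGamma s u ≤ ∫ t in Set.Ioi u, u ^ (s - 1) * Real.exp (-t) := by
    apply setIntegral_mono_on (iGamma_integrableOn hs hu.le)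
      ((integrableOn_exp_neg_Ioi u).const_mul _) measurableSet_Ioi
    intro t ht
    rw [Set.mem_Ioi] at ht
    have : t ^ (s - 1) ≤ u ^ (s - 1) :=
      Real.rpow_le_rpow_of_nonpos hu ht.le (by linarith)
    rw [mul_comm (u ^ (s-1))]
    exact mul_le_mul_of_nonneg_left this (Real.exp_nonneg _)
  calc iGamma s u ≤ ∫ t in Set.Ioi u, u ^ (s - 1) * Real.exp (-t) := h1
    _ = u ^ (s - 1) * Real.exp (-u) := by
        rw [integral_const_mul, integral_exp_neg_Ioi]

lemma integral_exp_neg_mul_Ioi' {c u : ℝ} (hc : 0 < c) :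
    ∫ t in Set.Ioi u, Real.exp (-(c * t)) = Real.exp (-(c * u)) / c := by
  have := integral_comp_mul_left_Ioi (fun t : ℝ => Real.exp (-t)) u hc
  simp only [smul_eq_mul] at this
  rw [this, integral_exp_neg_Ioi]
  field_simp

lemma iGamma_ge {s u : ℝ} (hs : 0 < s) (hs1 : s ≤ 1) (hu : 1 ≤ u) :
    u ^ (s - 1) * Real.exp (-u) * (1 - 1 / u) ≤ iGamma s u := by
  have hu0 : 0 < u := lt_of_lt_of_le one_pos hu
  set c : ℝ := 1 + (1 - s) / u with hc_def
  have hd : 0 ≤ (1 - s) / u := div_nonneg (by linarith) hu0.le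
  have hc : 0 < c := by positivity
  have key : ∫ t in Set.Ioi u, u ^ (s - 1) * Real.exp (1 - s) * Real.exp (-(c * t))
      ≤ iGamma s u := by
    apply setIntegral_mono_on _ (iGamma_integrableOn hs hu0.le) measurableSet_Ioi
    · intro t ht
      rw [Set.mem_Ioi] at ht
      have ht0 : 0 < t := lt_trans hu0 ht
      -- t^(s-1) ≥ u^(s-1) * exp((s-1)*(t-u)/u)
      have hlog : Real.log t - Real.log u ≤ (t - u) / u := by
        have h1 : Real.log (t / u) ≤ t / u - 1 :=
          Real.log_le_sub_one_of_pos (by positivity)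
        rw [Real.log_div ht0.ne' hu0.ne'] at h1
        have : t / u - 1 = (t - u) / u := by field_simp
        linarith [this ▸ h1]
      have hexp : (s - 1) * (Real.log u + (t - u) / u) ≤ (s - 1) * Real.log t := by
        apply mul_le_mul_of_nonpos_left _ (by linarith)
        linarith
      have ht_rpow : t ^ (s - 1) = Real.exp ((s - 1) * Real.log t) := by
        rw [Real.rpow_def_of_pos ht0, mul_comm]
      have hu_rpow : u ^ (s - 1) = Real.exp ((s - 1) * Real.log u) := by
        rw [Real.rpow_def_of_pos hu0, mul_comm]
      have : u ^ (s - 1) * Real.exp (1 - s) * Real.exp (-(c * t))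
          = Real.exp ((s - 1) * (Real.log u + (t - u) / u)) * Real.exp (-t) := by
        rw [hu_rpow, ← Real.exp_add, ← Real.exp_add, ← Real.exp_add]
        congr 1
        have hct : c * t = t + (1 - s) * t / u := by
          rw [hc_def]; field_simp
        rw [hct]
        field_simp
        ring
      rw [this, ht_rpow, mul_comm (Real.exp (-t))]
      exact mul_le_mul_of_nonneg_right (Real.exp_le_exp.2 hexp) (Real.exp_nonneg _)
    · have hint : IntegrableOn (fun t : ℝ => Real.exp (-(c * t))) (Set.Ioi u) := by
        simpa [neg_mul] using exp_neg_integrableOn_Ioi u hc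
      exact hint.const_mul _
  have hval : ∫ t in Set.Ioi u, u ^ (s - 1) * Real.exp (1 - s) * Real.exp (-(c * t))
      = u ^ (s - 1) * Real.exp (-u) / c := by
    rw [integral_const_mul, integral_exp_neg_mul_Ioi' hc]
    have : c * u = u + (1 - s) := by
      rw [hc_def]; field_simp
    rw [this]
    rw [show -(u + (1 - s)) = (1 - s) * (-1) + (-u) by ring]
    rw [Real.exp_add, show (1-s) * (-1) = -(1-s) by ring, Real.exp_neg]
    field_simp
  have hfinal : u ^ (s - 1) * Real.exp (-u) * (1 - 1 / u)
      ≤ u ^ (s - 1) * Real.exp (-u) / c := by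
    have hnum : 0 ≤ u ^ (s - 1) * Real.exp (-u) := by positivity
    rw [div_eq_mul_inv]
    apply mul_le_mul_of_nonneg_left _ hnum
    have : (1 - 1/u) * c ≤ 1 := by
      have : (1 - 1/u) * c = 1 + (1-s)/u - 1/u - (1/u) * ((1-s)/u) := by
        rw [hc_def]; ring
      rw [this]
      have h2 : 0 ≤ (1/u) * ((1-s)/u) := by positivity
      have h1 : (1 - s) / u ≤ 1 / u := by
        gcongr
        linarith
      linarith
    calc 1 - 1/u = (1 - 1/u) * c * c⁻¹ := by field_simp
      _ ≤ 1 * c⁻¹ := by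
          apply mul_le_mul_of_nonneg_right this (by positivity)
      _ = c⁻¹ := one_mul _
  linarith [key, hval ▸ key]

lemma integrableOn_rpow_Ioc {r : ℝ} (hr : -1 < r) :
    IntegrableOn (fun x : ℝ => x ^ r) (Set.Ioc 0 1) :=
  (intervalIntegrable_iff_integrableOn_Ioc_of_le zero_le_one).1 (intervalIntegral.intervalIntegrable_rpow' hr)

lemma integral_rpow_Ioc {r : ℝ} (hr : -1 < r) :
    ∫ x in Set.Ioc (0:ℝ) 1, x ^ r = 1 / (r + 1) := by
  rw [← intervalIntegral.integral_of_le zero_le_one]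
  rw [integral_rpow (Or.inl hr)]
  rw [Real.one_rpow, Real.zero_rpow (by linarith)]
  ring

lemma Gamma_split {s : ℝ} (hs : 0 < s) :
    Real.Gamma s = (∫ x in Set.Ioc (0:ℝ) 1, Real.exp (-x) * x ^ (s - 1))
      + ∫ x in Set.Ioi (1:ℝ), Real.exp (-x) * x ^ (s - 1) := by
  rw [Real.Gamma_eq_integral hs, ← Set.Ioc_union_Ioi_eq_Ioi (zero_le_one (α := ℝ))]
  exact setIntegral_union (Set.Ioc_disjoint_Ioi le_rfl) measurableSet_Ioi
    ((Real.GammaIntegral_convergent hs).mono_set Set.Ioc_subset_Ioi_self)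
    ((Real.GammaIntegral_convergent hs).mono_set (Set.Ioi_subset_Ioi zero_le_one))

lemma mul_Gamma_ge {s : ℝ} (hs : 0 < s) (hs1 : s ≤ 1) : 1 - s ≤ s * Real.Gamma s := by
  have hI2 : 0 ≤ ∫ x in Set.Ioi (1:ℝ), Real.exp (-x) * x ^ (s - 1) := by
    apply setIntegral_nonneg measurableSet_Ioi
    intro t ht
    rw [Set.mem_Ioi] at ht
    positivity
  have hI1 : (∫ x in Set.Ioc (0:ℝ) 1, (x ^ (s-1) - x ^ s))
      ≤ ∫ x in Set.Ioc (0:ℝ) 1, Real.exp (-x) * x ^ (s - 1) := by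
    apply setIntegral_mono_on
      ((integrableOn_rpow_Ioc (by linarith)).sub (integrableOn_rpow_Ioc (by linarith)))
      ((Real.GammaIntegral_convergent hs).mono_set Set.Ioc_subset_Ioi_self)
      measurableSet_Ioc
    intro t ht
    obtain ⟨ht0, ht1⟩ := ht
    have h1 : t ^ s = t * t ^ (s - 1) := by
      rw [← Real.rpow_one_add' ht0.le (by linarith)]
      ring_nf
    have h2 : 1 - t ≤ Real.exp (-t) := by
      have := Real.add_one_le_exp (-t); linarith
    have h3 : (0:ℝ) ≤ t ^ (s - 1) := Real.rpow_nonneg ht0.le _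
    calc t ^ (s-1) - t ^ s = (1 - t) * t ^ (s - 1) := by rw [h1]; ring
      _ ≤ Real.exp (-t) * t ^ (s - 1) := mul_le_mul_of_nonneg_right h2 h3
  have hval : (∫ x in Set.Ioc (0:ℝ) 1, (x ^ (s-1) - x ^ s)) = 1/s - 1/(s+1) := by
    rw [integral_sub (integrableOn_rpow_Ioc (by linarith)) (integrableOn_rpow_Ioc (by linarith)),
      integral_rpow_Ioc (by linarith), integral_rpow_Ioc (by linarith)]
    ring_nf
  have hΓ : 1/s - 1/(s+1) ≤ Real.Gamma s := by
    rw [Gamma_split hs]; rw [hval] at hI1; linarith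
  have hss : s * (1/s - 1/(s+1)) = 1 - s/(s+1) := by field_simp
  have : 1 - s ≤ 1 - s/(s+1) := by
    have : s/(s+1) ≤ s := by
      rw [div_le_iff₀ (by linarith)]
      nlinarith
    linarith
  calc 1 - s ≤ 1 - s/(s+1) := this
    _ = s * (1/s - 1/(s+1)) := hss.symm
    _ ≤ s * Real.Gamma s := mul_le_mul_of_nonneg_left hΓ hs.le

lemma mul_Gamma_le {s : ℝ} (hs : 0 < s) (hs1 : s ≤ 1) : s * Real.Gamma s ≤ 1 + s := by
  have hI1 : (∫ x in Set.Ioc (0:ℝ) 1, Real.exp (-x) * x ^ (s - 1))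
      ≤ ∫ x in Set.Ioc (0:ℝ) 1, x ^ (s-1) := by
    apply setIntegral_mono_on
      ((Real.GammaIntegral_convergent hs).mono_set Set.Ioc_subset_Ioi_self)
      (integrableOn_rpow_Ioc (by linarith))
      measurableSet_Ioc
    intro t ht
    obtain ⟨ht0, _⟩ := ht
    have h3 : (0:ℝ) ≤ t ^ (s - 1) := Real.rpow_nonneg ht0.le _
    calc Real.exp (-t) * t ^ (s-1) ≤ 1 * t ^ (s-1) := by
          apply mul_le_mul_of_nonneg_right _ h3
          rw [Real.exp_le_one_iff]; linarith
      _ = t ^ (s-1) := one_mul _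
  have hI2 : (∫ x in Set.Ioi (1:ℝ), Real.exp (-x) * x ^ (s - 1))
      ≤ ∫ x in Set.Ioi (1:ℝ), Real.exp (-x) := by
    apply setIntegral_mono_on
      ((Real.GammaIntegral_convergent hs).mono_set (Set.Ioi_subset_Ioi zero_le_one))
      (integrableOn_exp_neg_Ioi 1)
      measurableSet_Ioi
    intro t ht
    rw [Set.mem_Ioi] at ht
    calc Real.exp (-t) * t ^ (s-1) ≤ Real.exp (-t) * 1 := by
          apply mul_le_mul_of_nonneg_left _ (Real.exp_nonneg _)
          exact Real.rpow_le_one_of_one_le_of_nonpos ht.le (by linarith)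
      _ = Real.exp (-t) := mul_one _
  have h2 : (∫ x in Set.Ioi (1:ℝ), Real.exp (-x)) = Real.exp (-1) := integral_exp_neg_Ioi 1
  have h3 : Real.exp (-1) ≤ 1 := by rw [Real.exp_le_one_iff]; norm_num
  have hΓ : Real.Gamma s ≤ 1/s + 1 := by
    rw [Gamma_split hs, integral_rpow_Ioc (by linarith : (-1:ℝ) < s - 1)] at *
    have : s - 1 + 1 = s := by ring
    rw [this] at hI1
    linarith
  calc s * Real.Gamma s ≤ s * (1/s + 1) := mul_le_mul_of_nonneg_left hΓ hs.le
    _ = 1 + s := by field_simp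

lemma gammaMeasure_Ioi_toReal {k y : ℝ} (hk : 0 < k) (hy : 0 ≤ y) :
    ((gammaMeasure (k/2) (1/2) (Set.Ioi y))).toReal
      = iGamma (k/2) (y/2) / Real.Gamma (k/2) := by
  have hs : 0 < k / 2 := by linarith
  rw [gammaMeasure, withDensity_apply _ measurableSet_Ioi]
  have htoReal : (∫⁻ t in Set.Ioi y, gammaPDF (k/2) (1/2) t).toReal
      = ∫ t in Set.Ioi y, gammaPDFReal (k/2) (1/2) t := by
    rw [integral_eq_lintegral_of_nonneg_ae
      (ae_of_all _ fun t => gammaPDFReal_nonneg hs one_half_pos t)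
      (measurable_gammaPDFReal _ _).aestronglyMeasurable.restrict]
    rfl
  rw [htoReal]
  have hcongr : ∫ t in Set.Ioi y, gammaPDFReal (k/2) (1/2) t
      = ∫ t in Set.Ioi y, (1/2:ℝ) ^ (k/2) / Real.Gamma (k/2)
          * (t ^ (k/2 - 1) * Real.exp (-(1/2 * t))) := by
    apply setIntegral_congr_fun measurableSet_Ioi
    intro t ht
    rw [Set.mem_Ioi] at ht
    have ht0 : 0 ≤ t := le_trans hy ht.le
    simp only [gammaPDFReal, if_pos ht0]
    ring
  rw [hcongr, integral_const_mul]
  have hsub : ∫ t in Set.Ioi y, t ^ (k/2 - 1) * Real.exp (-(1/2 * t))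
      = (2:ℝ) ^ (k/2) * iGamma (k/2) (y/2) := by
    have h := integral_comp_mul_left_Ioi
      (fun t => t ^ (k/2 - 1) * Real.exp (-(1/2 * t))) (y/2) (two_pos (α := ℝ))
    have h2 : (2:ℝ) * (y/2) = y := by ring
    rw [h2, smul_eq_mul] at h
    have h3 : ∫ x in Set.Ioi (y/2), (2*x) ^ (k/2 - 1) * Real.exp (-(1/2 * (2*x)))
        = (2:ℝ) ^ (k/2 - 1) * iGamma (k/2) (y/2) := by
      rw [iGamma, ← integral_const_mul]
      apply setIntegral_congr_fun measurableSet_Ioi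
      intro t ht
      rw [Set.mem_Ioi] at ht
      have ht0 : 0 < t := lt_of_le_of_lt (by linarith) ht
      dsimp only
      rw [Real.mul_rpow (by norm_num : (0:ℝ) ≤ 2) ht0.le]
      have : -(1/2 * (2*t)) = -t := by ring
      rw [this]
      ring
    rw [h3] at h
    have h4 : ∫ t in Set.Ioi y, t ^ (k/2 - 1) * Real.exp (-(1/2 * t))
        = 2 * ((2:ℝ) ^ (k/2 - 1) * iGamma (k/2) (y/2)) := by
      rw [h]; ring
    rw [h4]
    have h5 : (2:ℝ) * (2:ℝ) ^ (k/2 - 1) = (2:ℝ) ^ (k/2) := by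
      rw [show (2:ℝ) * (2:ℝ) ^ (k/2-1) = (2:ℝ) ^ (1:ℝ) * (2:ℝ) ^ (k/2-1) by
        rw [Real.rpow_one]]
      rw [← Real.rpow_add two_pos]
      ring_nf
    rw [← mul_assoc, h5]
  rw [hsub]
  have h6 : (1/2:ℝ) ^ (k/2) * (2:ℝ) ^ (k/2) = 1 := by
    rw [← Real.mul_rpow (by norm_num) (by norm_num)]
    norm_num
  field_simp
  calc (1/2:ℝ) ^ (k/2) * (2:ℝ) ^ (k/2) * iGamma (k/2) (y/2)
      = ((1/2:ℝ) ^ (k/2) * (2:ℝ) ^ (k/2)) * iGamma (k/2) (y/2) := by ring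
    _ = iGamma (k/2) (y/2) := by rw [h6, one_mul]

lemma chiMeasure_Iic_toReal {k c : ℝ} (hk : 0 < k) (hc : 0 ≤ c) :
    ((chiMeasure k) (Set.Iic c)).toReal
      = 1 - iGamma (k/2) (c^2/2) / Real.Gamma (k/2) := by
  have hs : 0 < k / 2 := by linarith
  haveI : IsProbabilityMeasure (gammaMeasure (k/2) (1/2)) :=
    isProbabilityMeasure_gammaMeasure hs one_half_pos
  have hmap : chiMeasure k (Set.Iic c) = gammaMeasure (k/2) (1/2) (Set.Iic (c^2)) := by
    rw [chiMeasure, Measure.map_apply Real.continuous_sqrt.measurable measurableSet_Iic]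
    congr 1
    ext t
    simp only [Set.mem_preimage, Set.mem_Iic]
    constructor
    · intro h
      rcases le_or_gt t 0 with ht | ht
      · nlinarith
      · nlinarith [Real.sq_sqrt ht.le, Real.sqrt_nonneg t]
    · intro h
      calc Real.sqrt t ≤ Real.sqrt (c^2) := Real.sqrt_le_sqrt h
        _ = c := by rw [Real.sqrt_sq hc]
  rw [hmap]
  have hcompl : Set.Iic (c^2) = (Set.Ioi (c^2))ᶜ := by simp
  rw [hcompl, prob_compl_eq_one_sub measurableSet_Ioi,
    ENNReal.toReal_sub_of_le prob_le_one ENNReal.one_ne_top, ENNReal.toReal_one,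
    gammaMeasure_Ioi_toReal hk (by positivity)]

lemma prob_max_eq {Ω : Type*} [MeasureSpace Ω] [IsProbabilityMeasure (ℙ : Measure Ω)]
    (n : ℕ) (Y : ℕ → Ω → ℝ) (hmeas : ∀ i, Measurable (Y i))
    (hindep : iIndepFun (fun i : Fin n => Y ((i : ℕ) + 1)) ℙ)
    (κ : ℕ → ℝ) (hlaw : ∀ i ∈ Finset.Icc 1 n, (ℙ : Measure Ω).map (Y i) = chiMeasure (κ i))
    (c : ℝ) :
    (ℙ {ω : Ω | ∀ i ∈ Finset.Icc 1 n, Y i ω ≤ c}).toReal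
      = ∏ i ∈ Finset.Icc 1 n, ((chiMeasure (κ i)) (Set.Iic c)).toReal := by
  have hset : {ω : Ω | ∀ i ∈ Finset.Icc 1 n, Y i ω ≤ c}
      = ⋂ j : Fin n, (Y ((j : ℕ) + 1)) ⁻¹' (Set.Iic c) := by
    ext ω
    simp only [Set.mem_setOf_eq, Set.mem_iInter, Set.mem_preimage, Set.mem_Iic,
      Finset.mem_Icc]
    constructor
    · intro h j
      exact h _ ⟨Nat.succ_le_succ (Nat.zero_le _), Nat.succ_le_of_lt j.2⟩
    · rintro h i ⟨h1, h2⟩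
      have hlt : i - 1 < n := by omega
      have := h ⟨i - 1, hlt⟩
      simpa [Nat.sub_add_cancel h1] using this
  have hprod : ℙ {ω : Ω | ∀ i ∈ Finset.Icc 1 n, Y i ω ≤ c}
      = ∏ j : Fin n, ℙ ((Y ((j : ℕ) + 1)) ⁻¹' (Set.Iic c)) := by
    rw [hset]
    exact hindep.meas_iInter (fun j => ⟨Set.Iic c, measurableSet_Iic, rfl⟩)
  have hlaw' : ∀ j : Fin n, ℙ ((Y ((j : ℕ) + 1)) ⁻¹' (Set.Iic c))
      = (chiMeasure (κ ((j : ℕ) + 1))) (Set.Iic c) := by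
    intro j
    rw [← Measure.map_apply (hmeas _) measurableSet_Iic]
    rw [hlaw ((j : ℕ) + 1) (Finset.mem_Icc.2 ⟨Nat.succ_le_succ (Nat.zero_le _),
      Nat.succ_le_of_lt j.2⟩)]
  rw [hprod]
  simp_rw [hlaw']
  rw [ENNReal.toReal_prod]
  rw [show ∏ j : Fin n, ((chiMeasure (κ ((j : ℕ) + 1))) (Set.Iic c)).toReal
      = ∏ j ∈ Finset.range n, ((chiMeasure (κ (j + 1))) (Set.Iic c)).toReal from
    Fin.prod_univ_eq_prod_range (fun j => ((chiMeasure (κ (j + 1))) (Set.Iic c)).toReal) n]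
  rw [← Finset.Ico_add_one_right_eq_Icc, Finset.prod_Ico_eq_prod_range]
  apply Finset.prod_congr rfl
  intro j _
  rw [Nat.add_comm 1 j]

lemma p_nonneg {s u : ℝ} (hs : 0 < s) (hu : 0 ≤ u) :
    0 ≤ iGamma s u / Real.Gamma s :=
  div_nonneg (iGamma_nonneg hs hu) (Real.Gamma_pos_of_pos hs).le

lemma p_upper {s δ u γ : ℝ} (hs : 0 < s) (hsδ : s ≤ δ) (hδ : δ ≤ 1/2)
    (hu : 2 ≤ u) (hγ : s * Real.log u ≤ γ) :
    iGamma s u / Real.Gamma s ≤ s * Real.exp γ * (Real.exp (-u) / u) / (1 - δ) := by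
  have hs1 : s ≤ 1 := by linarith
  have hu0 : 0 < u := by linarith
  have hδ0 : 0 < 1 - δ := by linarith
  have hΓlb : (1 - δ) / s ≤ Real.Gamma s := by
    rw [div_le_iff₀ hs]
    have := mul_Gamma_ge hs hs1
    nlinarith [this]
  have hnum : iGamma s u ≤ Real.exp γ * (Real.exp (-u) / u) := by
    have h1 : iGamma s u ≤ u ^ (s - 1) * Real.exp (-u) := iGamma_le hs hs1 hu0
    have h2 : u ^ (s - 1 : ℝ) = u ^ (s : ℝ) / u := by
      rw [show s - 1 = s - (1:ℝ) from rfl, Real.rpow_sub hu0, Real.rpow_one]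
    have h3 : u ^ (s : ℝ) ≤ Real.exp γ := by
      rw [Real.rpow_def_of_pos hu0]
      exact Real.exp_le_exp.2 (by rw [mul_comm] at hγ; exact hγ)
    calc iGamma s u ≤ u ^ (s - 1) * Real.exp (-u) := h1
      _ = u ^ (s:ℝ) * (Real.exp (-u) / u) := by rw [h2]; ring
      _ ≤ Real.exp γ * (Real.exp (-u) / u) := by
          apply mul_le_mul_of_nonneg_right h3 (by positivity)
  have hp : iGamma s u / Real.Gamma s ≤ (Real.exp γ * (Real.exp (-u) / u)) / ((1 - δ) / s) := by
    apply div_le_div₀ (by positivity) hnum (by positivity) hΓlb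
  calc iGamma s u / Real.Gamma s ≤ (Real.exp γ * (Real.exp (-u) / u)) / ((1 - δ) / s) := hp
    _ = s * Real.exp γ * (Real.exp (-u) / u) / (1 - δ) := by
        field_simp

lemma p_lower {s δ u : ℝ} (hs : 0 < s) (hsδ : s ≤ δ) (hδ : δ ≤ 1/2) (hu : 2 ≤ u) :
    s * (Real.exp (-u) / u) * (1 - 1 / u) * (1 - δ) ≤ iGamma s u / Real.Gamma s := by
  have hs1 : s ≤ 1 := by linarith
  have hu0 : 0 < u := by linarith
  have hu1 : 1 ≤ u := by linarith
  have hδ0 : 0 < 1 - δ := by linarith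
  have h1u : 0 ≤ 1 - 1/u := by
    have : 1/u ≤ 1/2 := by rw [div_le_div_iff₀ hu0 two_pos]; linarith
    linarith
  have hΓub : Real.Gamma s ≤ (1 + s) / s := by
    rw [le_div_iff₀ hs]
    have := mul_Gamma_le hs hs1
    nlinarith
  have hnum : (Real.exp (-u) / u) * (1 - 1/u) ≤ iGamma s u := by
    have h1 : u ^ (s - 1) * Real.exp (-u) * (1 - 1/u) ≤ iGamma s u := iGamma_ge hs hs1 hu1
    have h2 : u ^ (s - 1 : ℝ) = u ^ (s : ℝ) / u := by
      rw [show s - 1 = s - (1:ℝ) from rfl, Real.rpow_sub hu0, Real.rpow_one]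
    have h3 : (1:ℝ) ≤ u ^ (s : ℝ) := Real.one_le_rpow hu1 hs.le
    calc (Real.exp (-u) / u) * (1 - 1/u) = 1 * (Real.exp (-u) / u) * (1 - 1/u) := by ring
      _ ≤ u ^ (s:ℝ) * (Real.exp (-u) / u) * (1 - 1/u) := by
          apply mul_le_mul_of_nonneg_right _ h1u
          apply mul_le_mul_of_nonneg_right h3 (by positivity)
      _ = u ^ (s - 1) * Real.exp (-u) * (1 - 1/u) := by rw [h2]; ring
      _ ≤ iGamma s u := h1
  have hΓpos : 0 < Real.Gamma s := Real.Gamma_pos_of_pos hs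
  have hp : ((Real.exp (-u) / u) * (1 - 1/u)) / ((1 + s) / s) ≤ iGamma s u / Real.Gamma s := by
    apply div_le_div₀ (iGamma_nonneg hs hu0.le) hnum (by positivity) hΓub
  have halg : s * (Real.exp (-u) / u) * (1 - 1/u) * (1 - δ)
      ≤ ((Real.exp (-u) / u) * (1 - 1/u)) / ((1 + s) / s) := by
    have h5 : (1 - δ) ≤ (1 + s)⁻¹ := by
      rw [show (1+s)⁻¹ = 1/(1+s) from (one_div _).symm,
        le_div_iff₀ (by linarith : (0:ℝ) < 1+s)]
      nlinarith
    have hA : 0 ≤ s * (Real.exp (-u)/u) * (1 - 1/u) := by positivity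
    calc s * (Real.exp (-u)/u) * (1 - 1/u) * (1 - δ)
        ≤ s * (Real.exp (-u)/u) * (1 - 1/u) * (1+s)⁻¹ :=
          mul_le_mul_of_nonneg_left h5 hA
      _ = ((Real.exp (-u)/u) * (1 - 1/u)) / ((1 + s)/s) := by
          field_simp
  exact le_trans halg hp

lemma log_one_sub_le {p : ℝ} (h1 : p < 1) : Real.log (1 - p) ≤ -p := by
  have := Real.log_le_sub_one_of_pos (by linarith : 0 < 1 - p)
  linarith

lemma log_one_sub_ge {p : ℝ} (h0 : 0 ≤ p) (h1 : p ≤ 1/2) :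
    -p - 2 * p^2 ≤ Real.log (1 - p) := by
  have hpos : 0 < 1 - p := by linarith
  rw [Real.le_log_iff_exp_le hpos]
  have hz : (0:ℝ) ≤ p + 2*p^2 := by positivity
  have hexp : 1 + (p + 2*p^2) ≤ Real.exp (p + 2*p^2) := by linarith [Real.add_one_le_exp (p + 2*p^2)]
  have hEpos : 0 < Real.exp (p + 2*p^2) := Real.exp_pos _
  have key : 1 ≤ (1 - p) * Real.exp (p + 2*p^2) := by nlinarith
  have : Real.exp (-p - 2*p^2) = (Real.exp (p + 2*p^2))⁻¹ := by
    rw [← Real.exp_neg]; ring_nf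
  rw [this, inv_le_iff_one_le_mul₀ hEpos]
  linarith [key]

lemma sum_Icc_cast (n : ℕ) : ∑ i ∈ Finset.Icc 1 n, (i:ℝ) = n * (n+1) / 2 := by
  induction n with
  | zero => simp
  | succ m ih =>
    rw [Finset.sum_Icc_succ_top (Nat.one_le_iff_ne_zero.2 (Nat.succ_ne_zero m))]
    rw [ih]
    push_cast
    ring

noncomputable def Uaux (x : ℝ) : ℝ → ℝ :=
  fun y => y + (x - Real.log y) + (x - Real.log y)^2 / (4*y)

lemma tendsto_log_div_self' : Tendsto (fun y : ℝ => Real.log y / y) atTop (nhds 0) :=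
  Real.isLittleO_log_id_atTop.tendsto_div_nhds_zero

lemma tendsto_sqrt_atTop' : Tendsto Real.sqrt atTop atTop := by
  apply (tendsto_rpow_atTop (by norm_num : (0:ℝ) < 1/2)).congr'
  filter_upwards [eventually_ge_atTop (0:ℝ)] with y hy
  rw [Real.sqrt_eq_rpow]

lemma tendsto_log_div_sqrt' : Tendsto (fun y : ℝ => Real.log y / Real.sqrt y) atTop (nhds 0) := by
  apply ((isLittleO_log_rpow_atTop (by norm_num : (0:ℝ) < 1/2)).tendsto_div_nhds_zero).congr'
  filter_upwards [eventually_ge_atTop (0:ℝ)] with y hy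
  rw [Real.sqrt_eq_rpow]

lemma W2_tendsto (x : ℝ) :
    Tendsto (fun y : ℝ => (x - Real.log y)^2 / (4*y)) atTop (nhds 0) := by
  have h1 : Tendsto (fun y : ℝ => x / Real.sqrt y) atTop (nhds 0) :=
    tendsto_const_nhds.div_atTop tendsto_sqrt_atTop'
  have hg : Tendsto (fun y : ℝ => (x - Real.log y) / (2 * Real.sqrt y)) atTop (nhds 0) := by
    have h3 := (h1.sub tendsto_log_div_sqrt').div_const 2
    rw [show ((0:ℝ) - 0)/2 = 0 by norm_num] at h3
    apply h3.congr'
    filter_upwards [eventually_gt_atTop (0:ℝ)] with y hy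
    rw [div_sub_div_same, div_div, mul_comm]
  have hmul := hg.mul hg
  rw [show (0:ℝ)*0 = 0 by norm_num] at hmul
  apply hmul.congr'
  filter_upwards [eventually_gt_atTop (0:ℝ)] with y hy
  have hsy : 0 < Real.sqrt y := Real.sqrt_pos.2 hy
  have hsq : Real.sqrt y * Real.sqrt y = y := Real.mul_self_sqrt hy.le
  field_simp
  nlinarith [hsq]

lemma Uaux_div_tendsto (x : ℝ) :
    Tendsto (fun y => Uaux x y / y) atTop (nhds 1) := by
  have h1 : Tendsto (fun y : ℝ => x / y) atTop (nhds 0) :=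
    tendsto_const_nhds.div_atTop tendsto_id
  have h2 := ((h1.sub tendsto_log_div_self').add ((W2_tendsto x).mul tendsto_inv_atTop_zero))
  have h3 := (tendsto_const_nhds :
    Tendsto (fun _ : ℝ => (1:ℝ)) atTop (nhds 1)).add h2
  rw [show (1:ℝ) + ((0 - 0) + 0 * 0) = 1 by norm_num] at h3
  apply h3.congr'
  filter_upwards [eventually_gt_atTop (0:ℝ)] with y hy
  rw [Uaux]
  field_simp
  ring

lemma Uaux_tendsto_atTop (x : ℝ) : Tendsto (Uaux x) atTop atTop := by
  refine tendsto_atTop_mono' atTop ?_ (Tendsto.atTop_div_const two_pos tendsto_id)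
  have hev := (Uaux_div_tendsto x).eventually (eventually_ge_nhds (by norm_num : (1:ℝ)/2 < 1))
  filter_upwards [hev, eventually_gt_atTop (0:ℝ)] with y h1 h2
  rw [le_div_iff₀ h2] at h1
  simpa using by linarith [h1]

lemma logE_tendsto (x : ℝ) :
    Tendsto (fun y => y - Uaux x y - Real.log (Uaux x y)) atTop (nhds (-x)) := by
  have hlogUy : Tendsto (fun y => Real.log (Uaux x y / y)) atTop (nhds 0) := by
    have hcont : ContinuousAt Real.log 1 := Real.continuousAt_log one_ne_zero
    have := hcont.tendsto.comp (Uaux_div_tendsto x)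
    rwa [Real.log_one] at this
  have h := (tendsto_const_nhds :
    Tendsto (fun _ : ℝ => -x) atTop (nhds (-x))).sub ((W2_tendsto x).add hlogUy)
  rw [show -x - ((0:ℝ) + 0) = -x by norm_num] at h
  apply h.congr'
  filter_upwards [eventually_gt_atTop (0:ℝ),
    (Uaux_tendsto_atTop x).eventually (eventually_gt_atTop (0:ℝ))] with y hy hUy
  have hlogdiv : Real.log (Uaux x y / y) = Real.log (Uaux x y) - Real.log y :=
    Real.log_div hUy.ne' hy.ne'
  have : Uaux x y = y + (x - Real.log y) + (x - Real.log y)^2/(4*y) := rfl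
  rw [hlogdiv]
  rw [this]
  ring

end Auxiliary

set_option maxHeartbeats 2000000 in
/-- **Gumbel fluctuations of the maximal off-diagonal entry, regime
`1/n² ≪ β ≪ 1/(n log log n)`:** if `X_{i,n} ~ χ(iβ_n)` are independent, then
`P(max_{1 ≤ i ≤ n} X_{i,n} ≤ x/a_n + b_n) → exp(−e^{−x}/4)`. -/
theorem max_chi_gumbel_first_regime
    {Ω : Type*} [MeasureSpace Ω] [IsProbabilityMeasure (ℙ : Measure Ω)]
    (β : ℕ → ℝ) (hβpos : ∀ n, 0 < β n)
    (hβ1 : Tendsto (fun n : ℕ => (n : ℝ) ^ 2 * β n) atTop atTop)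
    (hβ2 : Tendsto (fun n : ℕ => (n : ℝ) * β n * Real.log (Real.log n)) atTop (nhds 0))
    (X : ℕ → ℕ → Ω → ℝ)
    (hmeas : ∀ n i, Measurable (X n i))
    (hindep : ∀ n, iIndepFun
      (fun i : Fin n => X n ((i : ℕ) + 1)) ℙ)
    (hlaw : ∀ n, ∀ i ∈ Finset.Icc 1 n,
      (ℙ : Measure Ω).map (X n i) = chiMeasure ((i : ℝ) * β n))
    (a b : ℕ → ℝ)
    (ha : ∀ n : ℕ, a n = Real.sqrt (2 * Real.log ((n : ℝ) ^ 2 * β n)))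
    (hb : ∀ n : ℕ, b n = a n - Real.log (Real.log ((n : ℝ) ^ 2 * β n)) / a n)
    (x : ℝ) (hx : 0 ≤ x) :
    Tendsto (fun n : ℕ =>
        (ℙ {ω : Ω | ∀ i ∈ Finset.Icc 1 n, X n i ω ≤ x / a n + b n}).toReal)
      atTop (nhds (Real.exp (-(Real.exp (-x)) / 4))) := by
  classical
  -- basic objects
  set L : ℕ → ℝ := fun n => Real.log ((n : ℝ) ^ 2 * β n) with hLdef
  have hL : Tendsto L atTop atTop := Real.tendsto_log_atTop.comp hβ1
  set u : ℕ → ℝ := fun n => Uaux x (L n) with hudef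
  have hu_top : Tendsto u atTop atTop := (Uaux_tendsto_atTop x).comp hL
  set p : ℕ → ℕ → ℝ :=
    fun n i => iGamma ((i : ℝ) * β n / 2) (u n) / Real.Gamma ((i : ℝ) * β n / 2) with hpdef
  set T : ℕ → ℝ := fun n => ∑ i ∈ Finset.Icc 1 n, p n i with hTdef
  set δ : ℕ → ℝ := fun n => (n : ℝ) * β n / 2 with hδdef
  set γ : ℕ → ℝ := fun n => (n : ℝ) * β n / 2 * Real.log (u n) with hγdef
  set E : ℕ → ℝ := fun n => (n : ℝ) ^ 2 * β n * Real.exp (-u n) / u n with hEdef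
  set q : ℕ → ℝ := fun n => E n * Real.exp (γ n) / (1 - δ n) * (1 / (2 * (n : ℝ)))
    with hqdef
  set S : ℕ → ℝ := fun n => ∑ i ∈ Finset.Icc 1 n, Real.log (1 - p n i) with hSdef
  -- limit of E
  have hlogE : Tendsto (fun n => L n - u n - Real.log (u n)) atTop (nhds (-x)) :=
    (logE_tendsto x).comp hL
  have hEeq : ∀ᶠ n in atTop, E n = Real.exp (L n - u n - Real.log (u n)) := by
    filter_upwards [eventually_ge_atTop 1, hu_top.eventually (eventually_gt_atTop (0:ℝ))]
      with n hn hun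
    have hn0 : (0:ℝ) < (n:ℝ) := by exact_mod_cast hn
    have hnb2 : (0:ℝ) < (n:ℝ)^2 * β n := mul_pos (by positivity) (hβpos n)
    have h1 : Real.exp (L n) = (n:ℝ)^2 * β n := Real.exp_log hnb2
    rw [show L n - u n - Real.log (u n) = L n + (-u n) + (-(Real.log (u n))) by ring,
      Real.exp_add, Real.exp_add, h1, Real.exp_neg (Real.log (u n)), Real.exp_log hun]
    rw [hEdef]
    ring
  have hE : Tendsto E atTop (nhds (Real.exp (-x))) :=
    Tendsto.congr' (hEeq.mono fun n h => h.symm)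
      ((Real.continuous_exp.tendsto (-x)).comp hlogE)
  -- n β n → 0
  have hll : Tendsto (fun n : ℕ => Real.log (Real.log (n:ℝ))) atTop atTop :=
    Real.tendsto_log_atTop.comp (Real.tendsto_log_atTop.comp tendsto_natCast_atTop_atTop)
  have hnb : Tendsto (fun n : ℕ => (n : ℝ) * β n) atTop (nhds 0) := by
    apply tendsto_of_tendsto_of_tendsto_of_le_of_le' tendsto_const_nhds hβ2
    · exact Eventually.of_forall fun n =>
        mul_nonneg (Nat.cast_nonneg n) (hβpos n).le
    · filter_upwards [hll.eventually_ge_atTop 1] with n h1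
      have hb0 : 0 ≤ (n:ℝ) * β n := mul_nonneg (Nat.cast_nonneg n) (hβpos n).le
      nlinarith
  have hδ0 : Tendsto δ atTop (nhds 0) := by
    have := hnb.div_const 2
    rw [show (0:ℝ)/2 = 0 by norm_num] at this
    exact this
  have hβle1 : ∀ᶠ n in atTop, β n ≤ 1 := by
    filter_upwards [hnb.eventually (eventually_le_nhds zero_lt_one),
      eventually_ge_atTop 1] with n h1 h2
    have hn1 : (1:ℝ) ≤ (n:ℝ) := by exact_mod_cast h2
    nlinarith [(hβpos n)]
  -- n β n * (log L + 1) → 0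
  have hnbM : Tendsto (fun n : ℕ => (n:ℝ) * β n * (Real.log (L n) + 1)) atTop (nhds 0) := by
    have hupper : Tendsto
        (fun n : ℕ => (n:ℝ)*β n*(Real.log 2 + 1) + (n:ℝ)*β n*Real.log (Real.log (n:ℝ)))
        atTop (nhds 0) := by
      have h1 := (hnb.mul_const (Real.log 2 + 1)).add hβ2
      rw [show (0:ℝ)*(Real.log 2+1) + 0 = 0 by ring] at h1
      exact h1
    apply tendsto_of_tendsto_of_tendsto_of_le_of_le' tendsto_const_nhds hupper
    · filter_upwards [hL.eventually_ge_atTop 1] with n h1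
      have h2 : 0 ≤ Real.log (L n) := Real.log_nonneg h1
      have hb0 : 0 ≤ (n:ℝ) * β n := mul_nonneg (Nat.cast_nonneg n) (hβpos n).le
      nlinarith
    · filter_upwards [hL.eventually_ge_atTop 1, hβle1, eventually_ge_atTop 2] with n h1 h2 h3
      have hn2 : (2:ℝ) ≤ (n:ℝ) := by exact_mod_cast h3
      have hlogn : 0 < Real.log (n:ℝ) :=
        Real.log_pos (by linarith)
      have hLle : L n ≤ 2 * Real.log (n:ℝ) := by
        rw [hLdef]
        simp only
        rw [Real.log_mul (by positivity) (hβpos n).ne']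
        have h4 : Real.log ((n:ℝ)^2) = 2 * Real.log (n:ℝ) := by
          rw [Real.log_pow]; push_cast; ring
        have h5 : Real.log (β n) ≤ 0 := Real.log_nonpos (hβpos n).le h2
        linarith
      have h6 : Real.log (L n) ≤ Real.log 2 + Real.log (Real.log (n:ℝ)) := by
        calc Real.log (L n) ≤ Real.log (2 * Real.log (n:ℝ)) :=
              Real.log_le_log (by linarith) hLle
          _ = Real.log 2 + Real.log (Real.log (n:ℝ)) :=
              Real.log_mul two_ne_zero hlogn.ne'
      have hb0 : 0 ≤ (n:ℝ) * β n := mul_nonneg (Nat.cast_nonneg n) (hβpos n).le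
      nlinarith
  -- u / L → 1 and log u ≤ log L + 1 eventually
  have hUdivL : Tendsto (fun n => u n / L n) atTop (nhds 1) := (Uaux_div_tendsto x).comp hL
  have hlogUdivL : Tendsto (fun n => Real.log (u n / L n)) atTop (nhds 0) := by
    have := (Real.continuousAt_log one_ne_zero).tendsto.comp hUdivL
    rwa [Real.log_one] at this
  have hlogu_le : ∀ᶠ n in atTop, Real.log (u n) ≤ Real.log (L n) + 1 := by
    filter_upwards [hlogUdivL.eventually (eventually_le_nhds zero_lt_one),
      hL.eventually (eventually_gt_atTop (0:ℝ)),
      hu_top.eventually (eventually_gt_atTop (0:ℝ))] with n h1 h2 h3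
    rw [Real.log_div h3.ne' h2.ne'] at h1
    linarith
  -- γ → 0
  have hγ0 : Tendsto γ atTop (nhds 0) := by
    apply tendsto_of_tendsto_of_tendsto_of_le_of_le' tendsto_const_nhds hnbM
    · filter_upwards [hu_top.eventually (eventually_ge_atTop (1:ℝ))] with n h1
      have h2 : 0 ≤ Real.log (u n) := Real.log_nonneg h1
      have hb0 : 0 ≤ (n:ℝ) * β n := mul_nonneg (Nat.cast_nonneg n) (hβpos n).le
      show (0:ℝ) ≤ (n:ℝ) * β n / 2 * Real.log (u n)
      positivity
    · filter_upwards [hlogu_le, hL.eventually_ge_atTop 1,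
        hu_top.eventually (eventually_ge_atTop (1:ℝ))] with n h1 h2 h3
      have h4 : 0 ≤ Real.log (u n) := Real.log_nonneg h3
      have h5 : 0 ≤ (n:ℝ) * β n := mul_nonneg (Nat.cast_nonneg n) (hβpos n).le
      have h6 : 0 ≤ Real.log (L n) := Real.log_nonneg h2
      show (n:ℝ) * β n / 2 * Real.log (u n) ≤ (n:ℝ) * β n * (Real.log (L n) + 1)
      nlinarith
  have hexpγ : Tendsto (fun n => Real.exp (γ n)) atTop (nhds 1) := by
    have := (Real.continuous_exp.tendsto 0).comp hγ0
    rwa [Real.exp_zero] at this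
  have h1δ : Tendsto (fun n => 1 - δ n) atTop (nhds 1) := by
    have := (tendsto_const_nhds : Tendsto (fun _ : ℕ => (1:ℝ)) atTop (nhds 1)).sub hδ0
    rwa [sub_zero] at this
  have hinv2n : Tendsto (fun n : ℕ => 1 / (2 * (n:ℝ))) atTop (nhds 0) := by
    apply tendsto_const_nhds.div_atTop
    exact Tendsto.const_mul_atTop two_pos tendsto_natCast_atTop_atTop
  have hq0 : Tendsto q atTop (nhds 0) := by
    have h1 := ((hE.mul hexpγ).div h1δ one_ne_zero).mul hinv2n
    rw [show Real.exp (-x) * 1 / 1 * 0 = 0 by ring] at h1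
    exact h1
  -- bounds on T
  set Ub : ℕ → ℝ := fun n => E n * (1 + 1/(n:ℝ)) * Real.exp (γ n) / (1 - δ n) / 4 with hUbdef
  set Lb : ℕ → ℝ := fun n => E n * (1 - 1/u n) * (1 - δ n) / 4 with hLbdef
  have h11n : Tendsto (fun n : ℕ => 1 + 1/(n:ℝ)) atTop (nhds 1) := by
    have h2 := (tendsto_const_nhds :
      Tendsto (fun _ : ℕ => (1:ℝ)) atTop (nhds 1)).add
      (tendsto_const_nhds.div_atTop tendsto_natCast_atTop_atTop (a := (1:ℝ)))
    rwa [add_zero] at h2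
  have h1u : Tendsto (fun n => 1 - 1/u n) atTop (nhds 1) := by
    have h2 := (tendsto_const_nhds :
      Tendsto (fun _ : ℕ => (1:ℝ)) atTop (nhds 1)).sub
      (tendsto_const_nhds.div_atTop hu_top (a := (1:ℝ)))
    rwa [sub_zero] at h2
  have hUb : Tendsto Ub atTop (nhds (Real.exp (-x)/4)) := by
    have h2 := (((hE.mul h11n).mul hexpγ).div h1δ one_ne_zero).div_const 4
    rw [show Real.exp (-x) * 1 * 1 / 1 / 4 = Real.exp (-x)/4 by ring] at h2
    exact h2
  have hLb : Tendsto Lb atTop (nhds (Real.exp (-x)/4)) := by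
    have h2 := ((hE.mul h1u).mul h1δ).div_const 4
    rw [show Real.exp (-x) * 1 * 1 / 4 = Real.exp (-x)/4 by ring] at h2
    exact h2
  -- the key per-n bounds
  have hmain : ∀ᶠ n in atTop,
      (Lb n ≤ T n ∧ T n ≤ Ub n) ∧ ∀ i ∈ Finset.Icc 1 n, 0 ≤ p n i ∧ p n i ≤ q n := by
    filter_upwards [hu_top.eventually (eventually_ge_atTop (2:ℝ)),
      hδ0.eventually (eventually_le_nhds (by norm_num : (0:ℝ) < 1/2)),
      eventually_ge_atTop 1] with n hu2 hδ12 hn1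
    have hn0 : (0:ℝ) < (n:ℝ) := by exact_mod_cast hn1
    have hβn := hβpos n
    have hδpos : 0 < δ n := by
      have : 0 < (n:ℝ) := hn0
      show 0 < (n:ℝ) * β n / 2
      positivity
    have hu0 : (0:ℝ) < u n := by linarith
    have h1δpos : 0 < 1 - δ n := by linarith
    have hEid : (n:ℝ)^2 * β n * (Real.exp (-u n) / u n) = E n := by
      show _ = (n:ℝ)^2 * β n * Real.exp (-u n) / u n
      ring
    -- single-term bounds
    have hterm : ∀ i ∈ Finset.Icc 1 n,
        ((i:ℝ) * β n / 2 * (Real.exp (-u n)/u n) * (1 - 1/u n) * (1 - δ n) ≤ p n i)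
        ∧ p n i ≤ (i:ℝ) * β n / 2 * Real.exp (γ n) * (Real.exp (-u n)/u n) / (1 - δ n) := by
      intro i hi
      rw [Finset.mem_Icc] at hi
      have hi1 : (1:ℝ) ≤ (i:ℝ) := by exact_mod_cast hi.1
      have hin : (i:ℝ) ≤ (n:ℝ) := by exact_mod_cast hi.2
      have hs : 0 < (i:ℝ) * β n / 2 := by positivity
      have hsδ : (i:ℝ) * β n / 2 ≤ δ n := by
        show _ ≤ (n:ℝ) * β n / 2
        have : (i:ℝ) * β n ≤ (n:ℝ) * β n := by nlinarith
        linarith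
      have hγi : ((i:ℝ) * β n / 2) * Real.log (u n) ≤ γ n := by
        show _ ≤ (n:ℝ) * β n / 2 * Real.log (u n)
        have hlogu : 0 ≤ Real.log (u n) := Real.log_nonneg (by linarith)
        have : (i:ℝ) * β n / 2 ≤ (n:ℝ) * β n / 2 := by nlinarith
        nlinarith
      exact ⟨p_lower hs hsδ hδ12 hu2, p_upper hs hsδ hδ12 hu2 hγi⟩
    constructor
    · constructor
      · -- Lb ≤ T
        have hsum : ∑ i ∈ Finset.Icc 1 n,
            ((i:ℝ) * β n / 2 * (Real.exp (-u n)/u n) * (1 - 1/u n) * (1 - δ n)) ≤ T n := by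
          rw [hTdef]
          exact Finset.sum_le_sum fun i hi => (hterm i hi).1
        have heval : ∑ i ∈ Finset.Icc 1 n,
            ((i:ℝ) * β n / 2 * (Real.exp (-u n)/u n) * (1 - 1/u n) * (1 - δ n))
            = (n:ℝ)*((n:ℝ)+1)/2 * (β n / 2 * (Real.exp (-u n)/u n) * (1 - 1/u n) * (1 - δ n)) := by
          rw [← sum_Icc_cast n, Finset.sum_mul]
          apply Finset.sum_congr rfl
          intro i _
          ring
        have hge : Lb n ≤ (n:ℝ)*((n:ℝ)+1)/2
            * (β n / 2 * (Real.exp (-u n)/u n) * (1 - 1/u n) * (1 - δ n)) := by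
          show E n * (1 - 1/u n) * (1 - δ n) / 4 ≤ _
          rw [← hEid]
          have h1u' : 0 ≤ 1 - 1/u n := by
            have : 1/u n ≤ 1/2 := by
              rw [div_le_div_iff₀ hu0 two_pos]; linarith
            linarith
          have hpos : 0 ≤ β n / 2 * (Real.exp (-u n)/u n) * (1 - 1/u n) * (1 - δ n) := by
            have hA : 0 ≤ β n / 2 * (Real.exp (-u n)/u n) :=
              mul_nonneg (div_nonneg (hβpos n).le (by norm_num))
                (div_nonneg (Real.exp_nonneg _) hu0.le)
            exact mul_nonneg (mul_nonneg hA h1u') h1δpos.le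
          have hnn : (n:ℝ)^2/2 ≤ (n:ℝ)*((n:ℝ)+1)/2 := by nlinarith
          calc (n:ℝ)^2 * β n * (Real.exp (-u n)/u n) * (1 - 1/u n) * (1 - δ n) / 4
              = (n:ℝ)^2/2 * (β n / 2 * (Real.exp (-u n)/u n) * (1 - 1/u n) * (1 - δ n)) := by
                ring
            _ ≤ (n:ℝ)*((n:ℝ)+1)/2 * (β n / 2 * (Real.exp (-u n)/u n) * (1 - 1/u n) * (1 - δ n)) :=
                mul_le_mul_of_nonneg_right hnn hpos
        linarith [heval ▸ hsum]
      · -- T ≤ Ub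
        have hsum : T n ≤ ∑ i ∈ Finset.Icc 1 n,
            ((i:ℝ) * β n / 2 * Real.exp (γ n) * (Real.exp (-u n)/u n) / (1 - δ n)) := by
          rw [hTdef]
          exact Finset.sum_le_sum fun i hi => (hterm i hi).2
        have heval : ∑ i ∈ Finset.Icc 1 n,
            ((i:ℝ) * β n / 2 * Real.exp (γ n) * (Real.exp (-u n)/u n) / (1 - δ n))
            = (n:ℝ)*((n:ℝ)+1)/2 * (β n / 2 * Real.exp (γ n) * (Real.exp (-u n)/u n) / (1 - δ n)) := by
          rw [← sum_Icc_cast n, Finset.sum_mul]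
          apply Finset.sum_congr rfl
          intro i _
          ring
        have heq : (n:ℝ)*((n:ℝ)+1)/2
            * (β n / 2 * Real.exp (γ n) * (Real.exp (-u n)/u n) / (1 - δ n)) = Ub n := by
          show _ = E n * (1 + 1/(n:ℝ)) * Real.exp (γ n) / (1 - δ n) / 4
          rw [← hEid]
          field_simp
          ring
        linarith [heval ▸ hsum, heq]
    · -- 0 ≤ p ≤ q
      intro i hi
      have h0 : 0 ≤ p n i := by
        rw [Finset.mem_Icc] at hi
        have hi1 : (1:ℝ) ≤ (i:ℝ) := by exact_mod_cast hi.1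
        exact p_nonneg (by positivity) hu0.le
      refine ⟨h0, ?_⟩
      have h2 := (hterm i hi).2
      rw [Finset.mem_Icc] at hi
      have hin : (i:ℝ) ≤ (n:ℝ) := by exact_mod_cast hi.2
      have hq_eq : (n:ℝ) * β n / 2 * Real.exp (γ n) * (Real.exp (-u n)/u n) / (1 - δ n)
          = q n := by
        show _ = E n * Real.exp (γ n) / (1 - δ n) * (1 / (2 * (n:ℝ)))
        rw [← hEid]
        field_simp
      have hmono : (i:ℝ) * β n / 2 * Real.exp (γ n) * (Real.exp (-u n)/u n) / (1 - δ n)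
          ≤ (n:ℝ) * β n / 2 * Real.exp (γ n) * (Real.exp (-u n)/u n) / (1 - δ n) := by
        gcongr <;> first | exact hin | skip
      exact h2.trans (hmono.trans_eq hq_eq)
  -- T → exp(-x)/4
  have hT : Tendsto T atTop (nhds (Real.exp (-x)/4)) := by
    apply tendsto_of_tendsto_of_tendsto_of_le_of_le' hLb hUb
    · exact hmain.mono fun n h => h.1.1
    · exact hmain.mono fun n h => h.1.2
  -- S → -(exp(-x)/4)
  have hq12 : ∀ᶠ n in atTop, q n ≤ 1/2 :=
    hq0.eventually (eventually_le_nhds (by norm_num : (0:ℝ) < 1/2))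
  have hSbounds : ∀ᶠ n in atTop, (-T n - 2 * q n * T n ≤ S n ∧ S n ≤ -T n) := by
    filter_upwards [hmain, hq12] with n hm hq2
    have hub : ∀ i ∈ Finset.Icc 1 n, Real.log (1 - p n i) ≤ -(p n i) := by
      intro i hi
      obtain ⟨h0, h1⟩ := hm.2 i hi
      exact log_one_sub_le (by linarith)
    have hlb : ∀ i ∈ Finset.Icc 1 n,
        -(p n i) - 2 * q n * p n i ≤ Real.log (1 - p n i) := by
      intro i hi
      obtain ⟨h0, h1⟩ := hm.2 i hi
      have := log_one_sub_ge h0 (by linarith)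
      have hsq : (p n i)^2 ≤ q n * p n i := by nlinarith
      nlinarith
    constructor
    · have := Finset.sum_le_sum hlb
      have heq : ∑ i ∈ Finset.Icc 1 n, (-(p n i) - 2 * q n * p n i)
          = -T n - 2 * q n * T n := by
        rw [hTdef]
        rw [Finset.sum_sub_distrib]
        rw [← Finset.sum_neg_distrib, ← Finset.mul_sum]
      rw [heq] at this
      exact this.trans_eq (by rw [hSdef])
    · have := Finset.sum_le_sum hub
      have heq : ∑ i ∈ Finset.Icc 1 n, (-(p n i)) = -T n := by
        rw [hTdef, ← Finset.sum_neg_distrib]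
      rw [heq] at this
      exact le_of_eq_of_le (by rw [hSdef]) this
  have hS : Tendsto S atTop (nhds (-(Real.exp (-x)/4))) := by
    have hlow : Tendsto (fun n => -T n - 2 * q n * T n) atTop
        (nhds (-(Real.exp (-x)/4))) := by
      have h2 := (hT.neg).sub ((hq0.const_mul 2).mul hT)
      rw [show -(Real.exp (-x)/4) - (2*0)*(Real.exp (-x)/4) = -(Real.exp (-x)/4) by ring] at h2
      exact h2
    exact tendsto_of_tendsto_of_tendsto_of_le_of_le' hlow hT.neg
      (hSbounds.mono fun n h => h.1) (hSbounds.mono fun n h => h.2)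
  -- identification of the probability
  have hprob_eq : ∀ᶠ n in atTop,
      (ℙ {ω : Ω | ∀ i ∈ Finset.Icc 1 n, X n i ω ≤ x / a n + b n}).toReal
        = Real.exp (S n) := by
    filter_upwards [hL.eventually_ge_atTop 1, hmain, hq12] with n hL1 hm hq2
    have hL0 : (0:ℝ) < L n := by linarith
    have hapos : 0 < a n := by
      rw [ha n]
      exact Real.sqrt_pos.2 (by simp only [hLdef] at hL0 ⊢; linarith)
    have ha2 : a n ^ 2 = 2 * L n := by
      rw [ha n]
      exact Real.sq_sqrt (by simp only [hLdef] at hL0 ⊢; linarith)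
    have hMlog : Real.log (Real.log ((n:ℝ)^2 * β n)) = Real.log (L n) := rfl
    have hcval : x / a n + b n = (2 * L n + (x - Real.log (L n))) / a n := by
      rw [hb n, hMlog]
      field_simp
      nlinarith [ha2]
    have hcnonneg : 0 ≤ x / a n + b n := by
      rw [hcval]
      apply div_nonneg _ hapos.le
      have := Real.log_le_sub_one_of_pos hL0
      linarith
    have hcu : (x / a n + b n)^2 / 2 = u n := by
      rw [hcval, div_pow, ha2]
      rw [hudef]
      simp only [Uaux]
      field_simp
      ring
    have hstep1 := prob_max_eq n (X n) (hmeas n) (hindep n)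
      (fun i => (i : ℝ) * β n) (hlaw n) (x / a n + b n)
    rw [hstep1]
    have hstep2 : ∀ i ∈ Finset.Icc 1 n,
        ((chiMeasure ((i:ℝ) * β n)) (Set.Iic (x / a n + b n))).toReal = 1 - p n i := by
      intro i hi
      rw [Finset.mem_Icc] at hi
      have hi1 : (1:ℝ) ≤ (i:ℝ) := by exact_mod_cast hi.1
      have hk : 0 < (i:ℝ) * β n := mul_pos (by linarith) (hβpos n)
      rw [chiMeasure_Iic_toReal hk hcnonneg, hcu, hpdef]
    rw [Finset.prod_congr rfl hstep2]
    rw [hSdef]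
    simp only
    rw [Real.exp_sum]
    apply Finset.prod_congr rfl
    intro i hi
    obtain ⟨h0, h1⟩ := hm.2 i hi
    rw [Real.exp_log (by linarith : (0:ℝ) < 1 - p n i)]
  -- conclude
  have hfinal : Tendsto (fun n => Real.exp (S n)) atTop
      (nhds (Real.exp (-(Real.exp (-x)/4)))) :=
    (Real.continuous_exp.tendsto _).comp hS
  have := Tendsto.congr' (hprob_eq.mono fun n h => h.symm) hfinal
  rwa [show -(Real.exp (-x))/4 = -(Real.exp (-x)/4) by ring]
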